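/- (The entropic value functions recover the risk-neutral value functions as β → 0.) For every policy π, every h ∈ {1,…,H+1}, and every state s ∈ S, the map β ↦ V^π_{h,β}(s), defined for β ≠ 0 by the entropic backward recursion with risk parameter β, tends to the risk-neutral value Ṽ^π_h(s) as β → 0 along β ≠ 0. -/

import Mathlib

open Real Filter Finset

namespace RiskMDP

variable {S A : Type*} [Fintype S] [Fintype A]

/-- Entropic value function of policy `pol`, by remaining-steps fuel:
`entV β r P pol H n s = V^pol_h(s)` with `h = H + 1 - n`. -/
noncomputable def entV (β : ℝ) (r : ℕ → S → A → ℝ) (P : ℕ → S → A → PMF S)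
    (pol : ℕ → S → A) (H : ℕ) : ℕ → S → ℝ
  | 0, _ => 0
  | n + 1, s =>
      r (H - n) s (pol (H - n) s) +
        (1 / β) * Real.log (∑ s' : S, (P (H - n) s (pol (H - n) s) s').toReal *
          Real.exp (β * entV β r P pol H n s'))

/-- Optimal entropic value function, by remaining-steps fuel. -/
noncomputable def entVstar (β : ℝ) (r : ℕ → S → A → ℝ) (P : ℕ → S → A → PMF S)
    (H : ℕ) : ℕ → S → ℝ
  | 0, _ => 0
  | n + 1, s =>
      ⨆ a : A, (r (H - n) s a +
        (1 / β) * Real.log (∑ s' : S, (P (H - n) s a s').toReal *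
          Real.exp (β * entVstar β r P H n s')))

/-- Entropic action-value function of policy `pol` at step `h`. -/
noncomputable def entQ (β : ℝ) (r : ℕ → S → A → ℝ) (P : ℕ → S → A → PMF S)
    (pol : ℕ → S → A) (H : ℕ) (h : ℕ) (s : S) (a : A) : ℝ :=
  r h s a + (1 / β) * Real.log (∑ s' : S, (P h s a s').toReal *
    Real.exp (β * entV β r P pol H (H - h) s'))

/-- Optimal entropic action-value function at step `h`. -/
noncomputable def entQstar (β : ℝ) (r : ℕ → S → A → ℝ) (P : ℕ → S → A → PMF S)
    (H : ℕ) (h : ℕ) (s : S) (a : A) : ℝ :=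
  r h s a + (1 / β) * Real.log (∑ s' : S, (P h s a s').toReal *
    Real.exp (β * entVstar β r P H (H - h) s'))

/-- Risk-neutral value function of policy `pol`, by remaining-steps fuel. -/
noncomputable def rnV (r : ℕ → S → A → ℝ) (P : ℕ → S → A → PMF S)
    (pol : ℕ → S → A) (H : ℕ) : ℕ → S → ℝ
  | 0, _ => 0
  | n + 1, s =>
      r (H - n) s (pol (H - n) s) +
        ∑ s' : S, (P (H - n) s (pol (H - n) s) s').toReal * rnV r P pol H n s'

/-- Risk-neutral optimal value function, by remaining-steps fuel. -/
noncomputable def rnVstar (r : ℕ → S → A → ℝ) (P : ℕ → S → A → PMF S)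
    (H : ℕ) : ℕ → S → ℝ
  | 0, _ => 0
  | n + 1, s =>
      ⨆ a : A, (r (H - n) s a +
        ∑ s' : S, (P (H - n) s a s').toReal * rnVstar r P H n s')

/-- Risk-neutral optimal action-value function at step `h`. -/
noncomputable def rnQstar (r : ℕ → S → A → ℝ) (P : ℕ → S → A → PMF S)
    (H : ℕ) (h : ℕ) (s : S) (a : A) : ℝ :=
  r h s a + ∑ s' : S, (P h s a s').toReal * rnVstar r P H (H - h) s'

/-- PMF on the list of states `(s_h, …, s_{h+n-1})` (so `n` states in total), starting from
state `s` at step `h` and following policy `pol`; built by iterated `PMF.bind`. -/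
noncomputable def traj (P : ℕ → S → A → PMF S) (pol : ℕ → S → A) :
    ℕ → ℕ → S → PMF (List S)
  | 0, _, _ => PMF.pure []
  | n + 1, h, s =>
      ((P h s (pol h s)).bind fun s' => traj P pol n (h + 1) s').map (fun l => s :: l)

/-- Cumulative reward `Σ_i r_{h+i}(s_{h+i}, pol_{h+i}(s_{h+i}))` along a list of states
starting at step `h`. -/
def listReward (r : ℕ → S → A → ℝ) (pol : ℕ → S → A) : ℕ → List S → ℝ
  | _, [] => 0
  | h, s :: l => r h s (pol h s) + listReward r pol (h + 1) l

/-- Cumulative reward `R(τ) = Σ_j r_j(s_j, a_j)` of a partial state–action trajectory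
whose first pair is at step `j`. -/
def pairReward (r : ℕ → S → A → ℝ) : ℕ → List (S × A) → ℝ
  | _, [] => 0
  | j, p :: l => r j p.1 p.2 + pairReward r (j + 1) l

/-- The normalizer `ψ_β`. -/
noncomputable def psi (β : ℝ) (H : ℕ) : ℝ :=
  if 0 < β then 1 / β else Real.exp (-β * H) / β

/-- The cascaded gap `Δ_{h,β}(s, a; τ)`. -/
noncomputable def cgap (β : ℝ) (r : ℕ → S → A → ℝ) (P : ℕ → S → A → PMF S)
    (H : ℕ) (h : ℕ) (s : S) (a : A) (τ : List (S × A)) : ℝ :=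
  psi β H * Real.exp (β * pairReward r 1 τ) *
    (Real.exp (β * entVstar β r P H (H + 1 - h) s) -
      Real.exp (β * entQstar β r P H h s a))


/-- Continuous extension of `(exp x - 1)/x` at `0`. -/
noncomputable def expSlope (x : ℝ) : ℝ := if x = 0 then 1 else (Real.exp x - 1) / x

lemma tendsto_expSlope : Filter.Tendsto expSlope (nhds (0:ℝ)) (nhds 1) := by
  have h : HasDerivAt Real.exp 1 0 := by simpa using Real.hasDerivAt_exp 0
  have h' := hasDerivAt_iff_tendsto_slope.mp h
  have heq : ∀ x ∈ ({(0:ℝ)}ᶜ : Set ℝ), slope Real.exp 0 x = expSlope x := by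
    intro x hx
    simp [slope, expSlope, if_neg (Set.mem_compl_singleton_iff.mp hx), div_eq_inv_mul]
  have h'' : Filter.Tendsto expSlope (nhdsWithin 0 {0}ᶜ) (nhds 1) :=
    h'.congr' (eventually_nhdsWithin_of_forall heq)
  have hpure : Filter.Tendsto expSlope (pure (0:ℝ)) (nhds 1) := by
    have : expSlope 0 = 1 := by simp [expSlope]
    simpa [this] using tendsto_pure_nhds expSlope 0
  have := h''.sup hpure
  rwa [nhdsNE_sup_pure] at this

/-- Continuous extension of `log x / (x - 1)` at `1`. -/
noncomputable def logSlope (x : ℝ) : ℝ := if x = 1 then 1 else Real.log x / (x - 1)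

lemma tendsto_logSlope : Filter.Tendsto logSlope (nhds (1:ℝ)) (nhds 1) := by
  have h : HasDerivAt Real.log 1 1 := by simpa using Real.hasDerivAt_log (one_ne_zero)
  have h' := hasDerivAt_iff_tendsto_slope.mp h
  have heq : ∀ x ∈ ({(1:ℝ)}ᶜ : Set ℝ), slope Real.log 1 x = logSlope x := by
    intro x hx
    simp [slope, logSlope, if_neg (Set.mem_compl_singleton_iff.mp hx), div_eq_inv_mul]
  have h'' : Filter.Tendsto logSlope (nhdsWithin 1 {1}ᶜ) (nhds 1) :=
    h'.congr' (eventually_nhdsWithin_of_forall heq)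
  have hpure : Filter.Tendsto logSlope (pure (1:ℝ)) (nhds 1) := by
    have : logSlope 1 = 1 := by simp [logSlope]
    simpa [this] using tendsto_pure_nhds logSlope 1
  have := h''.sup hpure
  rwa [nhdsNE_sup_pure] at this

lemma tendsto_exp_term {c : ℝ → ℝ} {v : ℝ}
    (hc : Filter.Tendsto c (nhdsWithin 0 {0}ᶜ) (nhds v)) :
    Filter.Tendsto (fun β : ℝ => (Real.exp (β * c β) - 1) / β)
      (nhdsWithin 0 {0}ᶜ) (nhds v) := by
  have hid : Filter.Tendsto (fun β : ℝ => β) (nhdsWithin 0 {0}ᶜ) (nhds 0) :=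
    tendsto_id.mono_left nhdsWithin_le_nhds
  have h0 : Filter.Tendsto (fun β : ℝ => β * c β) (nhdsWithin 0 {0}ᶜ) (nhds 0) := by
    simpa using hid.mul hc
  have h1 : Filter.Tendsto (fun β : ℝ => c β * expSlope (β * c β))
      (nhdsWithin 0 {0}ᶜ) (nhds v) := by
    simpa using hc.mul (tendsto_expSlope.comp h0)
  refine h1.congr' ?_
  filter_upwards [self_mem_nhdsWithin] with β hβ
  have hβ0 : β ≠ 0 := hβ
  by_cases hcb : c β = 0
  · simp [expSlope, hcb]
  · have : β * c β ≠ 0 := mul_ne_zero hβ0 hcb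
    rw [expSlope, if_neg this]
    field_simp

lemma tendsto_log_div {f : ℝ → ℝ} {m : ℝ}
    (hf : Filter.Tendsto f (nhdsWithin 0 {0}ᶜ) (nhds 1))
    (hs : Filter.Tendsto (fun β : ℝ => (f β - 1) / β) (nhdsWithin 0 {0}ᶜ) (nhds m)) :
    Filter.Tendsto (fun β : ℝ => (1 / β) * Real.log (f β))
      (nhdsWithin 0 {0}ᶜ) (nhds m) := by
  have h1 : Filter.Tendsto (fun β : ℝ => logSlope (f β) * ((f β - 1) / β))
      (nhdsWithin 0 {0}ᶜ) (nhds m) := by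
    simpa using (tendsto_logSlope.comp hf).mul hs
  refine h1.congr ?_
  intro β
  by_cases hfb : f β = 1
  · simp [logSlope, hfb]
  · have h2 : f β - 1 ≠ 0 := sub_ne_zero.mpr hfb
    rw [logSlope, if_neg hfb]
    field_simp

lemma entV_tendsto_rnV {S A : Type*} [Fintype S] [Fintype A]
    (r : ℕ → S → A → ℝ) (P : ℕ → S → A → PMF S) (pol : ℕ → S → A) (H : ℕ) :
    ∀ (n : ℕ) (s : S),
      Filter.Tendsto (fun β : ℝ => entV β r P pol H n s)
        (nhdsWithin 0 {0}ᶜ) (nhds (rnV r P pol H n s)) := by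
  intro n
  induction n with
  | zero =>
      intro s
      simp only [entV, rnV]
      exact tendsto_const_nhds
  | succ n ih =>
      intro s
      set a := pol (H - n) s with ha
      set p : S → ℝ := fun s' => ((P (H - n) s a s').toReal) with hp
      have hsum : ∑ s' : S, p s' = 1 := by
        have h1 : (∑ s' : S, P (H - n) s a s') = 1 := by
          rw [← tsum_fintype (L := SummationFilter.unconditional S)]
          exact (P (H - n) s a).tsum_coe
        have h2 : (∑ s' : S, P (H - n) s a s').toReal = ∑ s' : S, p s' := by
          exact ENNReal.toReal_sum (fun i _ => (P (H - n) s a).apply_ne_top i)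
        rw [← h2, h1, ENNReal.toReal_one]
      set f : ℝ → ℝ := fun β => ∑ s' : S, p s' * Real.exp (β * entV β r P pol H n s')
        with hf
      have hid : Filter.Tendsto (fun β : ℝ => β) (nhdsWithin 0 {0}ᶜ) (nhds 0) :=
        tendsto_id.mono_left nhdsWithin_le_nhds
      have hf1 : Filter.Tendsto f (nhdsWithin 0 {0}ᶜ) (nhds 1) := by
        rw [← hsum]
        refine tendsto_finset_sum _ (fun s' _ => ?_)
        have h0 : Filter.Tendsto (fun β : ℝ => β * entV β r P pol H n s')
            (nhdsWithin 0 {0}ᶜ) (nhds 0) := by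
          simpa using hid.mul (ih s')
        have := (Real.continuous_exp.tendsto 0).comp h0
        simpa using tendsto_const_nhds.mul this
      have hslope : Filter.Tendsto (fun β : ℝ => (f β - 1) / β)
          (nhdsWithin 0 {0}ᶜ)
          (nhds (∑ s' : S, p s' * rnV r P pol H n s')) := by
        have hterm : Filter.Tendsto
            (fun β : ℝ => ∑ s' : S,
              p s' * ((Real.exp (β * entV β r P pol H n s') - 1) / β))
            (nhdsWithin 0 {0}ᶜ)
            (nhds (∑ s' : S, p s' * rnV r P pol H n s')) :=
          tendsto_finset_sum _ (fun s' _ =>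
            (tendsto_exp_term (ih s')).const_mul (p s'))
        refine hterm.congr (fun β => ?_)
        have : f β - 1 = ∑ s' : S, p s' * (Real.exp (β * entV β r P pol H n s') - 1) := by
          rw [hf]
          simp only [mul_sub, mul_one, Finset.sum_sub_distrib, hsum]
        rw [this, Finset.sum_div]
        exact Finset.sum_congr rfl (fun s' _ => (mul_div_assoc _ _ _).symm)
      have hlog := tendsto_log_div hf1 hslope
      have hfinal := (tendsto_const_nhds (x := r (H - n) s a)
        (f := nhdsWithin (0:ℝ) {0}ᶜ)).add hlog
      have hV : (fun β : ℝ => entV β r P pol H (n + 1) s) =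
          fun β : ℝ => r (H - n) s a + (1 / β) * Real.log (f β) := by
        funext β
        simp only [entV, hf, hp, ha]
      have hR : rnV r P pol H (n + 1) s =
          r (H - n) s a + ∑ s' : S, p s' * rnV r P pol H n s' := by
        simp only [rnV, hp, ha]
      rw [hV, hR]
      exact hfinal

/-- The entropic value functions recover the risk-neutral value
functions as `β → 0` along `β ≠ 0`. -/
theorem entropic_value_tendsto_riskNeutral
    {S A : Type*} [Fintype S] [Nonempty S] [Fintype A] [Nonempty A]
    (H : ℕ) (hH : 1 ≤ H)
    (r : ℕ → S → A → ℝ) (hr : ∀ h ∈ Finset.Icc 1 H, ∀ s a, 0 ≤ r h s a ∧ r h s a ≤ 1)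
    (P : ℕ → S → A → PMF S) :
    ∀ (pol : ℕ → S → A), ∀ h ∈ Finset.Icc 1 (H + 1), ∀ s : S,
      Filter.Tendsto (fun β : ℝ => entV β r P pol H (H + 1 - h) s)
        (nhdsWithin 0 {0}ᶜ) (nhds (rnV r P pol H (H + 1 - h) s)) := by
  intro pol h _ s
  exact entV_tendsto_rnV r P pol H (H + 1 - h) s

end RiskMDP
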